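/- Let n be odd, h be odd, h ≥ 2, n ≥ 1, and suppose h ≤ n. Then the Wiener index of the orbit O^1_0 = V^1_0 ∪ V^0_n of ZT(n,h) equals W(O^1_0) = (h/2)(h² + 4hn − 2h − 1). -/

import Mathlib

open SimpleGraph

/-- Vertices of the zig-zag tubulene `ZT(n,h)`: a vertex `v^k_{i,j}` is the triple
`(k, i, j)` with `k ∈ {0,1}` the type, `0 ≤ i ≤ n` the layer, and `j ∈ ℤ_h`. -/
abbrev ZTVert (n h : ℕ) := Fin 2 × Fin (n + 1) × ZMod h

/-- The zig-zag tubulene `ZT(n,h)`: edges are `v^0_{i,j} ~ v^1_{i,j}`,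
`v^1_{i,j} ~ v^0_{i,j+1}` (second index modulo `h`) and `v^1_{i,j} ~ v^0_{i+1,j}`. -/
def ZT (n h : ℕ) : SimpleGraph (ZTVert n h) :=
  SimpleGraph.fromRel (fun a b =>
    (a.1 = 0 ∧ b.1 = 1 ∧ a.2.1 = b.2.1 ∧ a.2.2 = b.2.2) ∨
    (a.1 = 1 ∧ b.1 = 0 ∧ a.2.1 = b.2.1 ∧ b.2.2 = a.2.2 + 1) ∨
    (a.1 = 1 ∧ b.1 = 0 ∧ (b.2.1 : ℕ) = (a.2.1 : ℕ) + 1 ∧ a.2.2 = b.2.2))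

section Adj
variable {n h : ℕ}

lemma zt_adj_flat (i : Fin (n+1)) (j : ZMod h) :
    (ZT n h).Adj (0, i, j) (1, i, j) := by
  rw [ZT, SimpleGraph.fromRel_adj]
  exact ⟨by simp [Prod.ext_iff], Or.inl (Or.inl ⟨rfl, rfl, rfl, rfl⟩)⟩

lemma zt_adj_shift (i : Fin (n+1)) (j : ZMod h) :
    (ZT n h).Adj (1, i, j) (0, i, j + 1) := by
  rw [ZT, SimpleGraph.fromRel_adj]
  exact ⟨by simp [Prod.ext_iff], Or.inl (Or.inr (Or.inl ⟨rfl, rfl, rfl, rfl⟩))⟩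

lemma zt_adj_up (i i' : Fin (n+1)) (hi : (i' : ℕ) = (i : ℕ) + 1) (j : ZMod h) :
    (ZT n h).Adj (1, i, j) (0, i', j) := by
  rw [ZT, SimpleGraph.fromRel_adj]
  exact ⟨by simp [Prod.ext_iff], Or.inl (Or.inr (Or.inr ⟨rfl, rfl, hi, rfl⟩))⟩

end Adj

-- general potential lemmas
lemma walk_int_potential {V : Type*} {G : SimpleGraph V} (f : V → ℤ)
    (hf : ∀ ⦃a b⦄, G.Adj a b → (f a - f b).natAbs ≤ 1) :
    ∀ {u v : V} (w : G.Walk u v), (f u - f v).natAbs ≤ w.length := by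
  intro u v w
  induction w with
  | nil => simp
  | @cons a b c ha w ih =>
    have h1 := hf ha
    have : f a - f c = (f a - f b) + (f b - f c) := by ring
    rw [this]
    calc ((f a - f b) + (f b - f c)).natAbs
        ≤ (f a - f b).natAbs + (f b - f c).natAbs := Int.natAbs_add_le _ _
      _ ≤ 1 + w.length := by omega
      _ = (SimpleGraph.Walk.cons ha w).length := by simp [SimpleGraph.Walk.length_cons]; omega

lemma walk_zmod_potential {V : Type*} {G : SimpleGraph V} {m : ℕ} (f : V → ZMod m)
    (hf : ∀ ⦃a b⦄, G.Adj a b → ∃ e : ℤ, e.natAbs ≤ 1 ∧ (e : ZMod m) = f a - f b) :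
    ∀ {u v : V} (w : G.Walk u v), ∃ z : ℤ, z.natAbs ≤ w.length ∧ (z : ZMod m) = f u - f v := by
  intro u v w
  induction w with
  | nil => exact ⟨0, by simp⟩
  | @cons a b c ha w ih =>
    obtain ⟨e, he1, he2⟩ := hf ha
    obtain ⟨z, hz1, hz2⟩ := ih
    refine ⟨e + z, ?_, ?_⟩
    · calc (e + z).natAbs ≤ e.natAbs + z.natAbs := Int.natAbs_add_le _ _
        _ ≤ (SimpleGraph.Walk.cons ha w).length := by simp [SimpleGraph.Walk.length_cons]; omega
    · push_cast
      rw [he2, hz2]; ring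

section Potentials
variable {n h : ℕ}

/-- vertical potential -/
def fV : ZTVert n h → ℤ := fun v => 2 * (v.2.1 : ℕ) + (v.1 : ℕ)

lemma fV_adj {a b : ZTVert n h} (hab : (ZT n h).Adj a b) :
    (fV a - fV b).natAbs ≤ 1 := by
  rw [ZT, SimpleGraph.fromRel_adj] at hab
  obtain ⟨-, hr⟩ := hab
  rcases hr with (⟨h1,h2,h3,-⟩|⟨h1,h2,h3,-⟩|⟨h1,h2,h3,-⟩)|(⟨h1,h2,h3,-⟩|⟨h1,h2,h3,-⟩|⟨h1,h2,h3,-⟩) <;>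
    simp only [fV, h1, h2, h3, Fin.val_zero, Fin.val_one, Fin.isValue] <;> omega

variable (h) in
/-- circular potential -/
def fC : ZTVert n h → ZMod (2 * h) :=
  fun v => ((2 * (v.2.2.val) + (v.2.1 : ℕ) + (v.1 : ℕ) : ℕ) : ZMod (2 * h))

lemma cast_two_mul_val (hh : 2 ≤ h) (j : ZMod h) (c : ℕ) :
    ((2 * (j + (c : ZMod h)).val : ℕ) : ZMod (2 * h)) = ((2 * j.val + 2 * c : ℕ) : ZMod (2 * h)) := by
  haveI : NeZero h := ⟨by omega⟩
  rw [ZMod.natCast_eq_natCast_iff]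
  have h1 : (j + (c : ZMod h)).val ≡ j.val + c [MOD h] := by
    rw [ZMod.val_add]
    calc (j.val + (c : ZMod h).val) % h ≡ j.val + (c : ZMod h).val [MOD h] := Nat.mod_modEq _ _
      _ ≡ j.val + c [MOD h] := Nat.ModEq.add_left _ (by rw [ZMod.val_natCast]; exact Nat.mod_modEq _ _)
  have := Nat.ModEq.mul_left' (c := 2) h1
  calc 2 * (j + (c : ZMod h)).val ≡ 2 * (j.val + c) [MOD 2 * h] := this
    _ = 2 * j.val + 2 * c := by ring

lemma fC_adj (hh : 2 ≤ h) {a b : ZTVert n h} (hab : (ZT n h).Adj a b) :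
    ∃ e : ℤ, e.natAbs ≤ 1 ∧ (e : ZMod (2 * h)) = fC h a - fC h b := by
  haveI : NeZero h := ⟨by omega⟩
  rw [ZT, SimpleGraph.fromRel_adj] at hab
  obtain ⟨-, hr⟩ := hab
  have key : ∀ j : ZMod h, ((2 * (j + 1).val : ℕ) : ZMod (2 * h))
      = ((2 * j.val : ℕ) : ZMod (2 * h)) + 2 := by
    intro j
    have := cast_two_mul_val hh j 1
    rw [Nat.cast_one] at this
    rw [this]; push_cast; ring
  rcases hr with (⟨h1,h2,h3,h4⟩|⟨h1,h2,h3,h4⟩|⟨h1,h2,h3,h4⟩)|(⟨h1,h2,h3,h4⟩|⟨h1,h2,h3,h4⟩|⟨h1,h2,h3,h4⟩)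
  · -- a = (0,i,j), b = (1,i,j)
    refine ⟨-1, by omega, ?_⟩
    simp only [fC, h1, h2, h3, h4, Fin.val_zero, Fin.val_one, Fin.isValue]
    push_cast; ring
  · -- a = (1,i,j), b = (0,i,j+1)
    refine ⟨-1, by omega, ?_⟩
    simp only [fC, h1, h2, h3, h4, Fin.val_zero, Fin.val_one, Fin.isValue]
    have := key a.2.2
    push_cast at this ⊢
    rw [this]; ring
  · -- a = (1,i,j), b = (0,i+1,j)
    refine ⟨0, by omega, ?_⟩
    simp only [fC, h1, h2, h3, h4, Fin.val_zero, Fin.val_one, Fin.isValue]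
    push_cast; ring
  · refine ⟨1, by omega, ?_⟩
    simp only [fC, h1, h2, h3, h4, Fin.val_zero, Fin.val_one, Fin.isValue]
    push_cast; ring
  · refine ⟨1, by omega, ?_⟩
    simp only [fC, h1, h2, h3, h4, Fin.val_zero, Fin.val_one, Fin.isValue]
    have := key b.2.2
    push_cast at this ⊢
    rw [this]; ring
  · refine ⟨0, by omega, ?_⟩
    simp only [fC, h1, h2, h3, h4, Fin.val_zero, Fin.val_one, Fin.isValue]
    push_cast; ring

end Potentials

section Walks
variable {n h : ℕ}

def ZTW (u v : ZTVert n h) (L : ℕ) : Prop := ∃ w : (ZT n h).Walk u v, w.length = L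

lemma ZTW.refl {u : ZTVert n h} : ZTW u u 0 := ⟨.nil, Eq.refl _⟩

lemma ZTW.of_adj {u v : ZTVert n h} (ha : (ZT n h).Adj u v) : ZTW u v 1 :=
  ⟨.cons ha .nil, Eq.refl _⟩

lemma ZTW.trans {u v w : ZTVert n h} {a b : ℕ} (h1 : ZTW u v a) (h2 : ZTW v w b) :
    ZTW u w (a + b) := by
  obtain ⟨p, hp⟩ := h1; obtain ⟨q, hq⟩ := h2
  exact ⟨p.append q, by simp [hp, hq]⟩

lemma ZTW.dist_le {u v : ZTVert n h} {L : ℕ} (h1 : ZTW u v L) : (ZT n h).dist u v ≤ L := by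
  obtain ⟨p, hp⟩ := h1; exact hp ▸ SimpleGraph.dist_le p

lemma ZTW.reachable {u v : ZTVert n h} {L : ℕ} (h1 : ZTW u v L) : (ZT n h).Reachable u v := by
  obtain ⟨p, -⟩ := h1; exact p.reachable

lemma ztw_stepR (i : Fin (n+1)) (a : ZMod h) :
    ZTW ((1, i, a) : ZTVert n h) (1, i, a + 1) 2 :=
  (ZTW.of_adj (zt_adj_shift i a)).trans (ZTW.of_adj (zt_adj_flat i (a + 1)))

lemma ztw_stepL (i : Fin (n+1)) (a : ZMod h) :
    ZTW ((1, i, a + 1) : ZTVert n h) (1, i, a) 2 :=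
  (ZTW.of_adj (zt_adj_flat i (a + 1)).symm).trans (ZTW.of_adj (zt_adj_shift i a).symm)

lemma ztw_stepRn (i : Fin (n+1)) (a : ZMod h) :
    ZTW ((0, i, a) : ZTVert n h) (0, i, a + 1) 2 :=
  (ZTW.of_adj (zt_adj_flat i a)).trans (ZTW.of_adj (zt_adj_shift i a))

lemma ztw_stepLn (i : Fin (n+1)) (a : ZMod h) :
    ZTW ((0, i, a + 1) : ZTVert n h) (0, i, a) 2 :=
  (ZTW.of_adj (zt_adj_shift i a).symm).trans (ZTW.of_adj (zt_adj_flat i a).symm)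

lemma ztwR (i : Fin (n+1)) (j : ZMod h) (t : ℕ) :
    ZTW ((1, i, j) : ZTVert n h) (1, i, j + (t : ZMod h)) (2 * t) := by
  induction t with
  | zero => simpa using ZTW.refl
  | succ t ih =>
    have := ih.trans (ztw_stepR i (j + (t : ZMod h)))
    have hc : j + ((t + 1 : ℕ) : ZMod h) = j + (t : ZMod h) + 1 := by push_cast; ring
    rw [hc]
    convert this using 1 <;> omega

lemma ztwL (i : Fin (n+1)) (j : ZMod h) (t : ℕ) :
    ZTW ((1, i, j) : ZTVert n h) (1, i, j - (t : ZMod h)) (2 * t) := by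
  induction t with
  | zero => simpa using ZTW.refl
  | succ t ih =>
    have hc : j - (t : ZMod h) = (j - (t : ZMod h) - 1) + 1 := by ring
    rw [hc] at ih
    have := ih.trans (ztw_stepL i (j - (t : ZMod h) - 1))
    have hc2 : j - ((t + 1 : ℕ) : ZMod h) = j - (t : ZMod h) - 1 := by push_cast; ring
    rw [hc2]
    convert this using 1 <;> omega

lemma ztwRn (i : Fin (n+1)) (j : ZMod h) (t : ℕ) :
    ZTW ((0, i, j) : ZTVert n h) (0, i, j + (t : ZMod h)) (2 * t) := by
  induction t with
  | zero => simpa using ZTW.refl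
  | succ t ih =>
    have := ih.trans (ztw_stepRn i (j + (t : ZMod h)))
    have hc : j + ((t + 1 : ℕ) : ZMod h) = j + (t : ZMod h) + 1 := by push_cast; ring
    rw [hc]
    convert this using 1 <;> omega

lemma ztwLn (i : Fin (n+1)) (j : ZMod h) (t : ℕ) :
    ZTW ((0, i, j) : ZTVert n h) (0, i, j - (t : ZMod h)) (2 * t) := by
  induction t with
  | zero => simpa using ZTW.refl
  | succ t ih =>
    have hc : j - (t : ZMod h) = (j - (t : ZMod h) - 1) + 1 := by ring
    rw [hc] at ih
    have := ih.trans (ztw_stepLn i (j - (t : ZMod h) - 1))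
    have hc2 : j - ((t + 1 : ℕ) : ZMod h) = j - (t : ZMod h) - 1 := by push_cast; ring
    rw [hc2]
    convert this using 1 <;> omega

lemma ztw_up_straight (i i' : Fin (n+1)) (hi : (i' : ℕ) = (i : ℕ) + 1) (a : ZMod h) :
    ZTW ((1, i, a) : ZTVert n h) (1, i', a) 2 :=
  (ZTW.of_adj (zt_adj_up i i' hi a)).trans (ZTW.of_adj (zt_adj_flat i' a))

lemma ztw_up_diag (i i' : Fin (n+1)) (hi : (i' : ℕ) = (i : ℕ) + 1) (a : ZMod h) :
    ZTW ((1, i, a + 1) : ZTVert n h) (1, i', a) 2 :=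
  (ZTW.of_adj (zt_adj_up i i' hi (a + 1))).trans (ZTW.of_adj (zt_adj_shift i' a).symm)

lemma ztwDiag (j : ZMod h) :
    ∀ i : ℕ, (hi : i ≤ n) → ∀ s : ℕ, s ≤ i →
      ZTW ((1, 0, j) : ZTVert n h) (1, ⟨i, Nat.lt_succ_of_le hi⟩, j - (s : ZMod h)) (2 * i) := by
  intro i
  induction i with
  | zero =>
    intro hi s hs
    interval_cases s
    simpa using ZTW.refl
  | succ i ih =>
    intro hi s hs
    have hii : i ≤ n := by omega
    have hup : ((⟨i + 1, Nat.lt_succ_of_le hi⟩ : Fin (n+1)) : ℕ)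
        = ((⟨i, Nat.lt_succ_of_le hii⟩ : Fin (n+1)) : ℕ) + 1 := rfl
    rcases Nat.lt_or_ge s (i + 1) with hcase | hcase
    · -- s ≤ i: straight step
      have step := ztw_up_straight (h := h) _ _ hup (j - (s : ZMod h))
      have := (ih hii s (by omega)).trans step
      convert this using 1 <;> omega
    · -- s = i + 1: diagonal step
      have hs' : s = i + 1 := by omega
      subst hs'
      have hc : j - (i : ZMod h) = (j - ((i + 1 : ℕ) : ZMod h)) + 1 := by push_cast; ring
      have base := ih hii i le_rfl
      rw [hc] at base
      have step := ztw_up_diag (h := h) _ _ hup (j - ((i + 1 : ℕ) : ZMod h))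
      have := base.trans step
      convert this using 1 <;> omega

end Walks

section Dist
variable {n h : ℕ}

lemma dist_cross (hh : 2 ≤ h) (hn : 1 ≤ n) (hle : h ≤ n) (j j' : ZMod h) :
    (ZT n h).dist (1, 0, j) (0, Fin.last n, j') = 2 * n - 1 := by
  haveI : NeZero h := ⟨by omega⟩
  set s : ℕ := (j - j').val with hs
  have hslt : s < h := ZMod.val_lt _
  -- the walk: diagonal to layer n-1, then up
  have hdiag := ztwDiag (n := n) j (n - 1) (by omega) s (by omega)
  have hupv : ((Fin.last n : Fin (n+1)) : ℕ)
      = ((⟨n - 1, Nat.lt_succ_of_le (by omega)⟩ : Fin (n+1)) : ℕ) + 1 := by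
    simp [Fin.val_last]; omega
  have hup := ZTW.of_adj (zt_adj_up _ _ hupv (j - (s : ZMod h)))
  have hw := hdiag.trans hup
  have hj' : j - (s : ZMod h) = j' := by
    rw [hs, ZMod.natCast_rightInverse (j - j'), sub_sub_cancel]
  rw [hj'] at hw
  have hub : (ZT n h).dist (1, 0, j) (0, Fin.last n, j') ≤ 2 * n - 1 := by
    have := hw.dist_le
    calc (ZT n h).dist (1, 0, j) (0, Fin.last n, j') ≤ 2 * (n - 1) + 1 := this
      _ = 2 * n - 1 := by omega
  -- lower bound
  obtain ⟨p, hp⟩ := hw.reachable.exists_walk_length_eq_dist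
  have hlb := walk_int_potential (fV (n := n) (h := h)) (fun a b hab => fV_adj hab) p
  have h1 : fV ((1, 0, j) : ZTVert n h) = 1 := by simp [fV]
  have h2 : fV ((0, Fin.last n, j') : ZTVert n h) = 2 * n := by simp [fV, Fin.val_last]
  rw [h1, h2, hp] at hlb
  omega

lemma dist_layer_aux (hh : 2 ≤ h) {u v : ZTVert n h} {c c' : ℕ}
    (hfu : fC h u = ((2 * c + c' : ℕ) : ZMod (2 * h)))
    (j j' : ZMod h) (hc : (c : ZMod h) = j) (hreach : (ZT n h).Reachable u v)
    (hfv : fC h v = ((2 * (j'.val) + c' : ℕ) : ZMod (2 * h))) :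
    2 * min ((j - j').val) (h - (j - j').val) ≤ (ZT n h).dist u v := by
  haveI : NeZero h := ⟨by omega⟩
  set t : ZMod h := j - j' with ht
  obtain ⟨p, hp⟩ := hreach.exists_walk_length_eq_dist
  obtain ⟨z, hz1, hz2⟩ := walk_zmod_potential (fC h) (fun a b hab => fC_adj hh hab) p
  rw [hp] at hz1
  -- the difference of potentials is 2 * t.val
  have hdiff : fC h u - fC h v = ((2 * t.val : ℕ) : ZMod (2 * h)) := by
    have hj : j = j' + ((t.val : ℕ) : ZMod h) := by
      rw [ZMod.natCast_rightInverse t, ht]; ring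
    have h2c : ((2 * c : ℕ) : ZMod (2*h)) = ((2 * j.val : ℕ) : ZMod (2*h)) := by
      rw [ZMod.natCast_eq_natCast_iff]
      have : c ≡ j.val [MOD h] := by
        have : ((c : ℕ) : ZMod h).val = j.val := by rw [hc]
        rw [ZMod.val_natCast] at this
        calc c ≡ c % h [MOD h] := (Nat.mod_modEq _ _).symm
          _ = j.val := this
      exact Nat.ModEq.mul_left' (c := 2) this
    have hkey := cast_two_mul_val hh j' t.val
    rw [hfu, hfv]
    push_cast
    push_cast at h2c hkey
    rw [h2c]
    rw [hj, hkey]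
    push_cast
    ring
  rw [hdiff] at hz2
  have hvlt : t.val < h := ZMod.val_lt _
  rcases le_or_gt 0 z with hz | hz
  · -- z ≥ 0 : z ≥ 2 * t.val  (mod 2h)
    have : (z.toNat : ZMod (2 * h)) = ((2 * t.val : ℕ) : ZMod (2 * h)) := by
      have h' : ((z.toNat : ℤ) : ZMod (2 * h)) = ((2 * t.val : ℕ) : ZMod (2 * h)) := by
        rw [Int.toNat_of_nonneg hz]; exact hz2
      exact_mod_cast h'
    rw [ZMod.natCast_eq_natCast_iff] at this
    have hmod : z.toNat % (2 * h) = 2 * t.val := by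
      have := this.symm
      unfold Nat.ModEq at this
      rw [Nat.mod_eq_of_lt (by omega)] at this
      omega
    have := Nat.mod_le z.toNat (2 * h)
    omega
  · -- z < 0 : -z ≥ 2 * (h - t.val)
    have hneg : ((-z).toNat : ZMod (2 * h)) = ((2 * h - 2 * t.val : ℕ) : ZMod (2 * h)) := by
      have h' : (((-z).toNat : ℤ) : ZMod (2 * h)) = ((2 * h - 2 * t.val : ℕ) : ZMod (2 * h)) := by
        rw [Int.toNat_of_nonneg (by omega), Int.cast_neg, hz2, Nat.cast_sub (by omega)]
        simp
      exact_mod_cast h'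
    rw [ZMod.natCast_eq_natCast_iff] at hneg
    rcases Nat.eq_zero_or_pos t.val with h0 | hpos
    · omega
    · have hmod : (-z).toNat % (2 * h) = 2 * h - 2 * t.val := by
        have := hneg.symm
        unfold Nat.ModEq at this
        rw [Nat.mod_eq_of_lt (by omega)] at this
        omega
      have := Nat.mod_le (-z).toNat (2 * h)
      omega

lemma dist_layer0 (hh : 2 ≤ h) (j j' : ZMod h) :
    (ZT n h).dist (1, 0, j) (1, 0, j') = 2 * min ((j - j').val) (h - (j - j').val) := by
  haveI : NeZero h := ⟨by omega⟩
  rcases eq_or_ne j j' with rfl | hne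
  · simp
  · have htne : j - j' ≠ 0 := sub_ne_zero.mpr hne
    have hub1 : (ZT n h).dist (1, 0, j) (1, 0, j') ≤ 2 * (j - j').val := by
      have hw := ztwL (n := n) 0 j (j - j').val
      rw [ZMod.natCast_rightInverse (j - j'), sub_sub_cancel] at hw
      exact hw.dist_le
    have hub2 : (ZT n h).dist (1, 0, j) (1, 0, j') ≤ 2 * (h - (j - j').val) := by
      have hw := ztwR (n := n) 0 j (j' - j).val
      rw [ZMod.natCast_rightInverse (j' - j), add_sub_cancel] at hw
      have hval : (j' - j).val = h - (j - j').val := by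
        have : j' - j = -(j - j') := by ring
        rw [this, ZMod.neg_val, if_neg htne]
      rw [hval] at hw
      exact hw.dist_le
    have hreach : (ZT n h).Reachable ((1,0,j) : ZTVert n h) (1,0,j') := by
      have hw := ztwL (n := n) 0 j (j - j').val
      rw [ZMod.natCast_rightInverse (j - j'), sub_sub_cancel] at hw
      exact hw.reachable
    have hlb := dist_layer_aux (n := n) hh (u := (1,0,j)) (v := (1,0,j'))
      (c := j.val) (c' := 1) (by simp [fC]) j j' (ZMod.natCast_rightInverse j) hreach
      (by simp [fC])
    omega

lemma dist_layern (hh : 2 ≤ h) (j j' : ZMod h) :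
    (ZT n h).dist (0, Fin.last n, j) (0, Fin.last n, j') = 2 * min ((j - j').val) (h - (j - j').val) := by
  haveI : NeZero h := ⟨by omega⟩
  rcases eq_or_ne j j' with rfl | hne
  · simp
  · have htne : j - j' ≠ 0 := sub_ne_zero.mpr hne
    have hub1 : (ZT n h).dist (0, Fin.last n, j) (0, Fin.last n, j') ≤ 2 * (j - j').val := by
      have hw := ztwLn (n := n) (Fin.last n) j (j - j').val
      rw [ZMod.natCast_rightInverse (j - j'), sub_sub_cancel] at hw
      exact hw.dist_le
    have hub2 : (ZT n h).dist (0, Fin.last n, j) (0, Fin.last n, j') ≤ 2 * (h - (j - j').val) := by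
      have hw := ztwRn (n := n) (Fin.last n) j (j' - j).val
      rw [ZMod.natCast_rightInverse (j' - j), add_sub_cancel] at hw
      have hval : (j' - j).val = h - (j - j').val := by
        have : j' - j = -(j - j') := by ring
        rw [this, ZMod.neg_val, if_neg htne]
      rw [hval] at hw
      exact hw.dist_le
    have hreach : (ZT n h).Reachable ((0,Fin.last n,j) : ZTVert n h) (0,Fin.last n,j') := by
      have hw := ztwLn (n := n) (Fin.last n) j (j - j').val
      rw [ZMod.natCast_rightInverse (j - j'), sub_sub_cancel] at hw
      exact hw.reachable
    have hlb := dist_layer_aux (n := n) hh (u := (0,Fin.last n,j)) (v := (0,Fin.last n,j'))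
      (c := j.val) (c' := (Fin.last n : ℕ)) (by simp [fC]) j j' (ZMod.natCast_rightInverse j) hreach
      (by simp [fC])
    omega

end Dist

section Sums

lemma sum_min_range (m : ℕ) :
    ∑ a ∈ Finset.range (2 * m + 1), min a (2 * m + 1 - a) = m * (m + 1) := by
  rw [Finset.range_eq_Ico, ← Finset.sum_Ico_consecutive _ (Nat.zero_le (m + 1)) (by omega : m + 1 ≤ 2 * m + 1)]
  have h1 : ∑ a ∈ Finset.Ico 0 (m + 1), min a (2 * m + 1 - a) = ∑ a ∈ Finset.range (m + 1), a := by
    rw [← Finset.range_eq_Ico]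
    refine Finset.sum_congr rfl fun a ha => ?_
    simp only [Finset.mem_range] at ha
    omega
  have h2 : ∑ a ∈ Finset.Ico (m + 1) (2 * m + 1), min a (2 * m + 1 - a)
      = ∑ i ∈ Finset.range m, (m - i) := by
    rw [Finset.sum_Ico_eq_sum_range]
    have hm : 2 * m + 1 - (m + 1) = m := by omega
    rw [hm]
    refine Finset.sum_congr rfl fun i hi => ?_
    simp only [Finset.mem_range] at hi
    omega
  rw [h1, h2]
  have g2 : ∑ i ∈ Finset.range m, (m - i) = ∑ i ∈ Finset.range m, (i + 1) := by
    rw [← Finset.sum_range_reflect]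
    refine Finset.sum_congr rfl fun i hi => ?_
    simp only [Finset.mem_range] at hi
    omega
  have g1 : (∑ i ∈ Finset.range (m + 1), i) * 2 = m * (m + 1) := by
    rw [Finset.sum_range_id_mul_two]
    simp only [Nat.add_sub_cancel]
    ring
  have g3 := Finset.sum_range_id_mul_two m
  have g5 : m * (m + 1) = m * (m - 1) + 2 * m := by
    cases m with
    | zero => simp
    | succ k => simp only [Nat.succ_sub_one]; ring
  rw [g2, Finset.sum_add_distrib, Finset.sum_const, Finset.card_range, smul_eq_mul]
  omega

lemma zmod_sum_min {h : ℕ} [NeZero h] (hh : 2 ≤ h) :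
    ∑ t : ZMod h, min t.val (h - t.val) = ∑ a ∈ Finset.range h, min a (h - a) := by
  refine Finset.sum_nbij' (fun t => t.val) (fun a => (a : ZMod h)) ?_ ?_ ?_ ?_ ?_
  · intro t _; simpa using ZMod.val_lt t
  · intro a _; simp
  · intro t _; exact ZMod.natCast_rightInverse t
  · intro a ha; simp only [Finset.mem_range] at ha; exact ZMod.val_cast_of_lt ha
  · intro t _; rfl

lemma zmod_shift_sum {h : ℕ} [NeZero h] (hh : 2 ≤ h) (f : ZMod h → ℕ) (j : ZMod h) :
    ∑ j' : ZMod h, f (j - j') = ∑ t : ZMod h, f t := by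
  rw [← Equiv.sum_comp (Equiv.subLeft j) (fun t => f (j - t))]
  refine Finset.sum_congr rfl fun t _ => ?_
  simp [Equiv.subLeft, sub_sub_cancel]

end Sums


/-- The set `V^k_i` of vertices of type `k` in layer `i` of `ZT(n,h)`. -/
def ZTVset (n h : ℕ) (k : Fin 2) (i : ℕ) : Set (ZTVert n h) :=
  {v | v.1 = k ∧ (v.2.1 : ℕ) = i}

/-- The Wiener index of a set `S` of vertices of a graph `G`:
`W(S) = ½ ∑_{u ∈ S} ∑_{v ∈ S} d_G(u,v)`. -/
noncomputable def setWiener {V : Type*} (G : SimpleGraph V) (S : Set V) : ℝ :=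
  (1 / 2) * ∑ᶠ u ∈ S, ∑ᶠ v ∈ S, (G.dist u v : ℝ)

/-- For odd `n ≥ 1` and odd `h ≥ 2` with `h ≤ n`, the Wiener
index of the orbit `O¹₀ = V¹₀ ∪ V⁰ₙ` of `ZT(n,h)` equals
`(h/2)(h² + 4hn − 2h − 1)`. -/
theorem wiener_orbit_13 (n h : ℕ) (hn : 1 ≤ n) (hh : 2 ≤ h)
    (hnodd : Odd n) (hhodd : Odd h) (hle : h ≤ n) :
    setWiener (ZT n h) (ZTVset n h 1 0 ∪ ZTVset n h 0 n) = ((h : ℝ) / 2) * ((h : ℝ) ^ 2 + 4 * h * n - 2 * h - 1) := by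
  haveI : NeZero h := ⟨by omega⟩
  set q : Fin (n + 1) := Fin.last n with hq
  set F1 : Finset (ZTVert n h) := Finset.univ.image (fun j : ZMod h => (1, 0, j)) with hF1
  set F2 : Finset (ZTVert n h) := Finset.univ.image (fun j : ZMod h => (0, q, j)) with hF2
  have hinj1 : ∀ x ∈ Finset.univ, ∀ y ∈ Finset.univ,
      (fun j : ZMod h => ((1, 0, j) : ZTVert n h)) x = (fun j => (1, 0, j)) y → x = y := by
    intro x _ y _ hxy; simpa [Prod.ext_iff] using hxy
  have hinj2 : ∀ x ∈ Finset.univ, ∀ y ∈ Finset.univ,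
      (fun j : ZMod h => ((0, q, j) : ZTVert n h)) x = (fun j => (0, q, j)) y → x = y := by
    intro x _ y _ hxy; simpa [Prod.ext_iff] using hxy
  have hdisj : Disjoint F1 F2 := by
    rw [Finset.disjoint_left]
    rintro a ha1 ha2
    rw [hF1, Finset.mem_image] at ha1
    rw [hF2, Finset.mem_image] at ha2
    obtain ⟨x, -, hx⟩ := ha1
    obtain ⟨y, -, hy⟩ := ha2
    rw [← hx] at hy
    simp [Prod.ext_iff] at hy
  have hU : ZTVset n h 1 0 ∪ ZTVset n h 0 n = ↑(F1 ∪ F2) := by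
    ext ⟨k, i, j⟩
    simp only [Set.mem_union, ZTVset, Set.mem_setOf_eq, Finset.coe_union, Set.mem_union,
      Finset.mem_coe, Finset.mem_image, Finset.mem_univ, true_and, hF1, hF2, Prod.mk.injEq]
    constructor
    · rintro (⟨hk, hi⟩ | ⟨hk, hi⟩)
      · exact Or.inl ⟨j, hk.symm, (Fin.ext (by simpa using hi.symm) : (0 : Fin (n+1)) = i), rfl⟩
      · exact Or.inr ⟨j, hk.symm, (Fin.ext (by simp [hq, Fin.val_last, hi]) : q = i), rfl⟩
    · rintro (⟨j', hk, hi, hj⟩ | ⟨j', hk, hi, hj⟩)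
      · exact Or.inl ⟨hk.symm, by rw [← hi]; simp⟩
      · exact Or.inr ⟨hk.symm, by rw [← hi]; simp [hq, Fin.val_last]⟩
  -- distance formulas, real-valued
  set μ : ZMod h → ℕ := fun t => min t.val (h - t.val) with hμ
  have hd11 : ∀ j j' : ZMod h, ((ZT n h).dist (1, 0, j) (1, 0, j') : ℝ) = 2 * (μ (j - j') : ℝ) := by
    intro j j'; rw [dist_layer0 hh]; simp only [hμ]; push_cast; ring
  have hd22 : ∀ j j' : ZMod h, ((ZT n h).dist (0, q, j) (0, q, j') : ℝ) = 2 * (μ (j - j') : ℝ) := by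
    intro j j'; rw [hq, dist_layern hh]; simp only [hμ]; push_cast; ring
  have hd12 : ∀ j j' : ZMod h, ((ZT n h).dist (1, 0, j) (0, q, j') : ℝ) = 2 * (n : ℝ) - 1 := by
    intro j j'; rw [hq, dist_cross hh hn hle, Nat.cast_sub (by omega)]; push_cast; ring
  have hd21 : ∀ j j' : ZMod h, ((ZT n h).dist (0, q, j) (1, 0, j') : ℝ) = 2 * (n : ℝ) - 1 := by
    intro j j'; rw [SimpleGraph.dist_comm]; exact hd12 j' j
  -- sum of μ
  obtain ⟨m, hm⟩ := hhodd
  have hsum_mu : ∀ j : ZMod h, ∑ j' : ZMod h, (μ (j - j') : ℝ) = (m : ℝ) * ((m : ℝ) + 1) := by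
    intro j
    have hnat : ∑ j' : ZMod h, μ (j - j') = m * (m + 1) := by
      rw [zmod_shift_sum hh μ j, hμ]
      simp only
      rw [zmod_sum_min hh]
      rw [hm] at *
      exact sum_min_range m
    rw [← Nat.cast_sum, hnat]
    push_cast; ring
  have hcard : (Finset.univ : Finset (ZMod h)).card = h := by
    simp [ZMod.card]
  -- split inner sums
  have hGsplit : ∀ u : ZTVert n h, ∑ v ∈ F1 ∪ F2, ((ZT n h).dist u v : ℝ)
      = (∑ j' : ZMod h, ((ZT n h).dist u (1, 0, j') : ℝ))
        + ∑ j' : ZMod h, ((ZT n h).dist u (0, q, j') : ℝ) := by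
    intro u
    rw [Finset.sum_union hdisj, hF1, hF2, Finset.sum_image hinj1, Finset.sum_image hinj2]
  rw [setWiener, hU, finsum_mem_coe_finset]
  simp only [finsum_mem_coe_finset]
  rw [Finset.sum_union hdisj, hF1, hF2, Finset.sum_image hinj1, Finset.sum_image hinj2]
  simp only [hF1, hF2] at hGsplit
  simp only [hGsplit]
  have hA : ∀ j : ZMod h, ∑ j' : ZMod h, ((ZT n h).dist (1, 0, j) (1, 0, j') : ℝ)
      = 2 * ((m : ℝ) * ((m : ℝ) + 1)) := by
    intro j
    simp only [hd11]
    rw [← Finset.mul_sum, hsum_mu]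
  have hB : ∀ j : ZMod h, ∑ j' : ZMod h, ((ZT n h).dist (0, q, j) (0, q, j') : ℝ)
      = 2 * ((m : ℝ) * ((m : ℝ) + 1)) := by
    intro j
    simp only [hd22]
    rw [← Finset.mul_sum, hsum_mu]
  have hC : ∀ j : ZMod h, ∑ j' : ZMod h, ((ZT n h).dist (1, 0, j) (0, q, j') : ℝ)
      = (h : ℝ) * (2 * (n : ℝ) - 1) := by
    intro j
    simp only [hd12]
    rw [Finset.sum_const, hcard, nsmul_eq_mul]
  have hD : ∀ j : ZMod h, ∑ j' : ZMod h, ((ZT n h).dist (0, q, j) (1, 0, j') : ℝ)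
      = (h : ℝ) * (2 * (n : ℝ) - 1) := by
    intro j
    simp only [hd21]
    rw [Finset.sum_const, hcard, nsmul_eq_mul]
  simp only [hA, hB, hC, hD]
  simp only [Finset.sum_const, hcard, nsmul_eq_mul]
  have hcast : (h : ℝ) = 2 * (m : ℝ) + 1 := by rw [hm]; push_cast; ring
  rw [hcast]
  ring
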